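/- Let ε, α, β, ω ∈ ℝ and let x, y : ℝ → ℝ be twice differentiable. Then for all t ∈ ℝ the following two identities hold: (d/dt)[ẋ − (ε/2)(x − βxy² − αx³/3)] − [−ω²x + (ε/2)(1 − αx² − βy²)ẋ + εβxyẏ] = ẍ + ε(αx² + βy² − 1)ẋ + ω²x, and (d/dt)[ẏ + (ε/2)(y − αyx² − βy³/3)] − [−ω²y − εαxyẋ − (ε/2)(1 − αx² − βy²)ẏ] = ÿ − ε(αx² + βy² − 1)ẏ + ω²y. In particular, x and y satisfy the Euler–Lagrange equations of the Lagrangian L if and only if ẍ + ε(αx² + βy² − 1)ẋ + ω²x = 0 and ÿ − ε(αx² + βy² − 1)ẏ + ω²y = 0. -/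

import Mathlib

theorem euler_lagrange_identity_symmetric_vdp
    (ε α β ω : ℝ) (x y : ℝ → ℝ)
    (hx : Differentiable ℝ x) (hx' : Differentiable ℝ (deriv x))
    (hy : Differentiable ℝ y) (hy' : Differentiable ℝ (deriv y)) :
    (∀ t : ℝ,
      deriv (fun s => deriv x s
          - ε / 2 * (x s - β * x s * (y s) ^ 2 - α * (x s) ^ 3 / 3)) t
        - (-ω ^ 2 * x t + ε / 2 * (1 - α * (x t) ^ 2 - β * (y t) ^ 2) * deriv x t
            + ε * β * x t * y t * deriv y t)
      = deriv (deriv x) t + ε * (α * (x t) ^ 2 + β * (y t) ^ 2 - 1) * deriv x t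
          + ω ^ 2 * x t) ∧
    (∀ t : ℝ,
      deriv (fun s => deriv y s
          + ε / 2 * (y s - α * y s * (x s) ^ 2 - β * (y s) ^ 3 / 3)) t
        - (-ω ^ 2 * y t - ε * α * x t * y t * deriv x t
            - ε / 2 * (1 - α * (x t) ^ 2 - β * (y t) ^ 2) * deriv y t)
      = deriv (deriv y) t - ε * (α * (x t) ^ 2 + β * (y t) ^ 2 - 1) * deriv y t
          + ω ^ 2 * y t) ∧
    (((∀ t : ℝ,
        deriv (fun s => deriv x s
            - ε / 2 * (x s - β * x s * (y s) ^ 2 - α * (x s) ^ 3 / 3)) t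
          - (-ω ^ 2 * x t + ε / 2 * (1 - α * (x t) ^ 2 - β * (y t) ^ 2) * deriv x t
              + ε * β * x t * y t * deriv y t) = 0) ∧
      (∀ t : ℝ,
        deriv (fun s => deriv y s
            + ε / 2 * (y s - α * y s * (x s) ^ 2 - β * (y s) ^ 3 / 3)) t
          - (-ω ^ 2 * y t - ε * α * x t * y t * deriv x t
              - ε / 2 * (1 - α * (x t) ^ 2 - β * (y t) ^ 2) * deriv y t) = 0))
      ↔
      ((∀ t : ℝ, deriv (deriv x) t
          + ε * (α * (x t) ^ 2 + β * (y t) ^ 2 - 1) * deriv x t + ω ^ 2 * x t = 0) ∧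
       (∀ t : ℝ, deriv (deriv y) t
          - ε * (α * (x t) ^ 2 + β * (y t) ^ 2 - 1) * deriv y t + ω ^ 2 * y t = 0))) := by
  have h1 : ∀ t : ℝ,
      deriv (fun s => deriv x s
          - ε / 2 * (x s - β * x s * (y s) ^ 2 - α * (x s) ^ 3 / 3)) t
        - (-ω ^ 2 * x t + ε / 2 * (1 - α * (x t) ^ 2 - β * (y t) ^ 2) * deriv x t
            + ε * β * x t * y t * deriv y t)
      = deriv (deriv x) t + ε * (α * (x t) ^ 2 + β * (y t) ^ 2 - 1) * deriv x t
          + ω ^ 2 * x t := by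
    intro t
    have hX : HasDerivAt x (deriv x t) t := (hx t).hasDerivAt
    have hY : HasDerivAt y (deriv y t) t := (hy t).hasDerivAt
    have hX' : HasDerivAt (deriv x) (deriv (deriv x) t) t := (hx' t).hasDerivAt
    have H := hX'.sub (((hX.sub ((hX.const_mul β).mul (hY.pow 2))).sub
      (((hX.pow 3).const_mul α).div_const 3)).const_mul (ε / 2))
    rw [show deriv (fun s => deriv x s
          - ε / 2 * (x s - β * x s * (y s) ^ 2 - α * (x s) ^ 3 / 3)) t = _ from H.deriv]; push_cast [Pi.pow_apply]; ring
  have h2 : ∀ t : ℝ,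
      deriv (fun s => deriv y s
          + ε / 2 * (y s - α * y s * (x s) ^ 2 - β * (y s) ^ 3 / 3)) t
        - (-ω ^ 2 * y t - ε * α * x t * y t * deriv x t
            - ε / 2 * (1 - α * (x t) ^ 2 - β * (y t) ^ 2) * deriv y t)
      = deriv (deriv y) t - ε * (α * (x t) ^ 2 + β * (y t) ^ 2 - 1) * deriv y t
          + ω ^ 2 * y t := by
    intro t
    have hX : HasDerivAt x (deriv x t) t := (hx t).hasDerivAt
    have hY : HasDerivAt y (deriv y t) t := (hy t).hasDerivAt
    have hY' : HasDerivAt (deriv y) (deriv (deriv y) t) t := (hy' t).hasDerivAt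
    have H := hY'.add (((hY.sub ((hY.const_mul α).mul (hX.pow 2))).sub
      (((hY.pow 3).const_mul β).div_const 3)).const_mul (ε / 2))
    rw [show deriv (fun s => deriv y s
          + ε / 2 * (y s - α * y s * (x s) ^ 2 - β * (y s) ^ 3 / 3)) t = _ from H.deriv]; push_cast [Pi.pow_apply]; ring
  refine ⟨h1, h2, ⟨fun ⟨a, b⟩ => ⟨fun t => by rw [← h1 t]; exact a t,
      fun t => by rw [← h2 t]; exact b t⟩,
    fun ⟨a, b⟩ => ⟨fun t => by rw [h1 t]; exact a t,
      fun t => by rw [h2 t]; exact b t⟩⟩⟩
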